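/- Let 1 < p < ∞, let R be a k-rectangle in ℝ^k × {pt} ⊂ ℝ^{k+1} which is the bottom face (at height a) of the (k+1)-rectangle R × [a, a+L] with L ≥ 1, and let w be C¹ on R × [a, a+L] in the last variable. Then ∫_R |w(·, a)|ᵖ ≤ ∫_{R×[a,a+L]} (|∂w/∂t|ᵖ + p |w|ᵖ), where t denotes the last coordinate. (This follows by writing ∫_R |w(·,a)|ᵖ = ∫_R ζ|w|ᵖ with ζ(t) = 1 − (t−a)/L, integrating by parts in t, and applying Young's inequality.) -/

import Mathlib

open MeasureTheory intervalIntegral Set Filter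

lemma my_continuous_phi {p : ℝ} (hp : 1 < p) :
    Continuous (fun x : ℝ => p * |x| ^ (p - 2) * x) := by
  have h1 : ContDiff ℝ 1 (fun x : ℝ => |x| ^ p) := by
    simpa [Real.norm_eq_abs] using contDiff_norm_rpow (E := ℝ) hp
  have h2 := h1.continuous_deriv le_rfl
  have h3 : deriv (fun x : ℝ => |x| ^ p) = fun x : ℝ => p * |x| ^ (p - 2) * x := by
    funext x; exact (hasDerivAt_abs_rpow x hp).deriv
  rwa [h3] at h2

lemma my_young {p : ℝ} (hp : 1 < p) (x y : ℝ) :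
    |p * |x| ^ (p - 2) * x * y| ≤ (p - 1) * |x| ^ p + |y| ^ p := by
  have hp0 : (0:ℝ) < p := by linarith
  have hp1 : (0:ℝ) < p - 1 := by linarith
  have key : p * (|x| ^ (p - 1) * |y|) ≤ (p - 1) * |x| ^ p + |y| ^ p := by
    have hq : Real.HolderConjugate (p / (p - 1)) p := by
      exact (Real.HolderConjugate.conjExponent hp).symm
    have h := Real.young_inequality_of_nonneg
      (Real.rpow_nonneg (abs_nonneg x) (p - 1)) (abs_nonneg y) hq
    have heq : (|x| ^ (p - 1)) ^ (p / (p - 1)) = |x| ^ p := by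
      rw [← Real.rpow_mul (abs_nonneg x)]
      congr 1
      field_simp
    rw [heq] at h
    have h2 : |x| ^ p / (p / (p - 1)) = |x| ^ p * (p - 1) / p := by
      field_simp
    rw [h2] at h
    have := mul_le_mul_of_nonneg_left h hp0.le
    calc p * (|x| ^ (p - 1) * |y|) ≤ p * (|x| ^ p * (p - 1) / p + |y| ^ p / p) := this
      _ = (p - 1) * |x| ^ p + |y| ^ p := by field_simp
  have hxx : |x| ^ (p - 2) * |x| = |x| ^ (p - 1) := by
    rcases eq_or_ne x 0 with h | h
    · rw [h, abs_zero, mul_zero, Real.zero_rpow (by linarith : p - 1 ≠ 0)]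
    · nth_rewrite 2 [← Real.rpow_one |x|]
      rw [← Real.rpow_add (abs_pos.2 h)]
      congr 1; ring
  have habs : |p * |x| ^ (p - 2) * x * y| = p * (|x| ^ (p - 1) * |y|) := by
    rw [abs_mul, abs_mul, abs_mul, abs_of_pos hp0,
      abs_of_nonneg (Real.rpow_nonneg (abs_nonneg x) (p - 2))]
    calc p * |x| ^ (p - 2) * |x| * |y| = p * ((|x| ^ (p - 2) * |x|) * |y|) := by ring
      _ = p * (|x| ^ (p - 1) * |y|) := by rw [hxx]
  rw [habs]; exact key

lemma my_pointwise {p a L : ℝ} (hp : 1 < p) (hL : 1 ≤ L) {f f' : ℝ → ℝ}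
    (hder : ∀ t ∈ Icc a (a + L), HasDerivWithinAt f (f' t) (Icc a (a + L)) t)
    (hfc : ContinuousOn f (Icc a (a + L)))
    (hf'c : ContinuousOn f' (Icc a (a + L))) :
    |f a| ^ p ≤ ∫ t in a..(a + L), (|f' t| ^ p + p * |f t| ^ p) := by
  have haL : a ≤ a + L := by linarith
  have ha1 : a + 1 ≤ a + L := by linarith
  have ha1' : a ≤ a + 1 := by linarith
  have hpo : (0:ℝ) ≤ p := by linarith
  set g : ℝ → ℝ := fun t => |f t| ^ p with hg_def
  set D : ℝ → ℝ := fun t => p * |f t| ^ (p - 2) * f t * f' t with hD_def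
  set h : ℝ → ℝ := fun t => (p - 1) * |f t| ^ p + |f' t| ^ p with hh_def
  have hgc : ContinuousOn g (Icc a (a + L)) := (hfc.abs).rpow_const (fun x _ => Or.inr hpo)
  have hDc : ContinuousOn D (Icc a (a + L)) :=
    ((my_continuous_phi hp).comp_continuousOn hfc).mul hf'c
  have hhc : ContinuousOn h (Icc a (a + L)) :=
    (continuousOn_const.mul ((hfc.abs).rpow_const fun x _ => Or.inr hpo)).add
      ((hf'c.abs).rpow_const fun x _ => Or.inr hpo)
  have hh0 : ∀ t, 0 ≤ h t := fun t =>
    add_nonneg (mul_nonneg (by linarith) (Real.rpow_nonneg (abs_nonneg _) _))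
      (Real.rpow_nonneg (abs_nonneg _) _)
  have hDh : ∀ t, |D t| ≤ h t := fun t => my_young hp (f t) (f' t)
  have hgder : ∀ t ∈ Icc a (a + L), HasDerivWithinAt g (D t) (Icc a (a + L)) t := fun t ht =>
    (hasDerivAt_abs_rpow (f t) hp).comp_hasDerivWithinAt t (hder t ht)
  have hh_int : IntervalIntegrable h volume a (a + L) :=
    ContinuousOn.intervalIntegrable (by rwa [uIcc_of_le haL])
  have hh_int1 : IntervalIntegrable h volume a (a + 1) :=
    ContinuousOn.intervalIntegrable
      (by rw [uIcc_of_le ha1']; exact hhc.mono (Icc_subset_Icc le_rfl ha1))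
  have claimA : ∀ t ∈ Icc a (a + 1), g a ≤ g t + ∫ s in a..(a + 1), h s := by
    intro t ht
    have hsub : Icc a t ⊆ Icc a (a + L) := Icc_subset_Icc le_rfl (ht.2.trans ha1)
    have hDint : IntervalIntegrable D volume a t :=
      ContinuousOn.intervalIntegrable (by rw [uIcc_of_le ht.1]; exact hDc.mono hsub)
    have hhint_t : IntervalIntegrable h volume a t :=
      ContinuousOn.intervalIntegrable (by rw [uIcc_of_le ht.1]; exact hhc.mono hsub)
    have hftc : ∫ s in a..t, D s = g t - g a := by
      apply integral_eq_sub_of_hasDeriv_right_of_le ht.1 (hgc.mono hsub) ?_ hDint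
      intro x hx
      have hx' : x ∈ Icc a (a + L) := ⟨hx.1.le, (hx.2.le.trans ht.2).trans ha1⟩
      have hmem : Icc a (a + L) ∈ nhds x :=
        Icc_mem_nhds hx.1 (lt_of_lt_of_le hx.2 (ht.2.trans ha1))
      exact ((hgder x hx').hasDerivAt hmem).hasDerivWithinAt
    have habs : |∫ s in a..t, D s| ≤ ∫ s in a..t, h s :=
      calc |∫ s in a..t, D s| ≤ ∫ s in a..t, |D s| := abs_integral_le_integral_abs ht.1
        _ ≤ ∫ s in a..t, h s := integral_mono_on ht.1 hDint.abs hhint_t (fun s _ => hDh s)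
    have hmono : ∫ s in a..t, h s ≤ ∫ s in a..(a + 1), h s :=
      integral_mono_interval le_rfl ht.1 ht.2 (Filter.Eventually.of_forall fun s => hh0 s) hh_int1
    have hne : -|∫ s in a..t, D s| ≤ ∫ s in a..t, D s := neg_abs_le _
    linarith
  have hgint1 : IntervalIntegrable g volume a (a + 1) :=
    ContinuousOn.intervalIntegrable
      (by rw [uIcc_of_le ha1']; exact hgc.mono (Icc_subset_Icc le_rfl ha1))
  have hCB : g a ≤ ∫ t in a..(a + 1), (g t + ∫ s in a..(a + 1), h s) := by
    have h0 : ∫ _ in a..(a + 1), (g a : ℝ) = g a := by simp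
    rw [← h0]
    exact integral_mono_on ha1' intervalIntegrable_const
      (hgint1.add intervalIntegrable_const) claimA
  have hsplit : ∫ t in a..(a + 1), (g t + ∫ s in a..(a + 1), h s)
      = (∫ t in a..(a + 1), g t) + ∫ s in a..(a + 1), h s := by
    rw [integral_add hgint1 intervalIntegrable_const]
    simp
  have hcomb : (∫ t in a..(a + 1), g t) + (∫ s in a..(a + 1), h s)
      = ∫ t in a..(a + 1), (|f' t| ^ p + p * |f t| ^ p) := by
    rw [← integral_add hgint1 hh_int1]
    apply intervalIntegral.integral_congr
    intro t _
    simp only [hg_def, hh_def]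
    ring
  have hlast : (∫ t in a..(a + 1), (|f' t| ^ p + p * |f t| ^ p))
      ≤ ∫ t in a..(a + L), (|f' t| ^ p + p * |f t| ^ p) := by
    apply integral_mono_interval le_rfl ha1' ha1
      (Filter.Eventually.of_forall fun s => ?_)
    · apply ContinuousOn.intervalIntegrable
      rw [uIcc_of_le haL]
      exact ((hf'c.abs).rpow_const fun x _ => Or.inr hpo).add
        (continuousOn_const.mul ((hfc.abs).rpow_const fun x _ => Or.inr hpo))
    · exact add_nonneg (Real.rpow_nonneg (abs_nonneg _) _)
        (mul_nonneg hpo (Real.rpow_nonneg (abs_nonneg _) _))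
  calc |f a| ^ p = g a := rfl
    _ ≤ _ := hCB
    _ = _ := hsplit
    _ = _ := hcomb
    _ ≤ _ := hlast

/-- **One-step trace estimate on a rectangle.** Let `1 < p < ∞`, let
`R = Π_i [c_i, d_i]` be a closed axis-parallel `k`-rectangle, `a ∈ ℝ`, `L ≥ 1`, and let
`w : R × [a, a+L] → ℝ` be continuous and continuously differentiable in the last
variable `t`, with `∂w/∂t = wt`. Then
`∫_R |w(·,a)|ᵖ ≤ ∫_{R×[a,a+L]} (|∂w/∂t|ᵖ + p |w|ᵖ)`. -/
theorem trace_step_estimate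
    (k : ℕ) (p : ℝ) (hp : 1 < p)
    (c d : Fin k → ℝ) (hcd : ∀ i, c i ≤ d i)
    (a L : ℝ) (hL : 1 ≤ L)
    (w wt : (Fin k → ℝ) → ℝ → ℝ)
    (hwt : ∀ y ∈ Set.univ.pi (fun i => Set.Icc (c i) (d i)),
      ∀ t ∈ Set.Icc a (a + L), HasDerivWithinAt (w y) (wt y t) (Set.Icc a (a + L)) t)
    (hwc : ContinuousOn (fun q : (Fin k → ℝ) × ℝ => w q.1 q.2)
      ((Set.univ.pi fun i => Set.Icc (c i) (d i)) ×ˢ Set.Icc a (a + L)))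
    (hwtc : ContinuousOn (fun q : (Fin k → ℝ) × ℝ => wt q.1 q.2)
      ((Set.univ.pi fun i => Set.Icc (c i) (d i)) ×ˢ Set.Icc a (a + L))) :
    (∫ y in Set.univ.pi (fun i => Set.Icc (c i) (d i)), |w y a| ^ p) ≤
      ∫ y in Set.univ.pi (fun i => Set.Icc (c i) (d i)),
        (∫ t in a..(a + L), (|wt y t| ^ p + p * |w y t| ^ p)) := by
  set R := Set.univ.pi fun i => Set.Icc (c i) (d i) with hR
  have hRc : IsCompact R := isCompact_univ_pi fun i => isCompact_Icc
  have hRm : MeasurableSet R := MeasurableSet.univ_pi fun i => measurableSet_Icc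
  have haL : a ≤ a + L := by linarith
  have hpo : (0:ℝ) ≤ p := by linarith
  set F : (Fin k → ℝ) × ℝ → ℝ := fun q => |wt q.1 q.2| ^ p + p * |w q.1 q.2| ^ p with hF
  have hFc : ContinuousOn F (R ×ˢ Icc a (a + L)) :=
    ((hwtc.abs).rpow_const fun x _ => Or.inr hpo).add
      (continuousOn_const.mul ((hwc.abs).rpow_const fun x _ => Or.inr hpo))
  have hKc : IsCompact (R ×ˢ Icc a (a + L)) := hRc.prod isCompact_Icc
  obtain ⟨M, hM⟩ := hKc.exists_bound_of_continuousOn hFc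
  have hsecw : ∀ y ∈ R, ContinuousOn (fun t => w y t) (Icc a (a + L)) := fun y hy =>
    hwc.comp ((continuous_const.prodMk continuous_id).continuousOn) (fun t ht => ⟨hy, ht⟩)
  have hsecwt : ∀ y ∈ R, ContinuousOn (fun t => wt y t) (Icc a (a + L)) := fun y hy =>
    hwtc.comp ((continuous_const.prodMk continuous_id).continuousOn) (fun t ht => ⟨hy, ht⟩)
  have hpt : ∀ y ∈ R, |w y a| ^ p ≤ ∫ t in a..(a + L), (|wt y t| ^ p + p * |w y t| ^ p) :=
    fun y hy => my_pointwise hp hL (hwt y hy) (hsecw y hy) (hsecwt y hy)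
  have hLc : ContinuousOn (fun y => |w y a| ^ p) R := by
    have : ContinuousOn (fun y => w y a) R :=
      hwc.comp ((continuous_id.prodMk continuous_const).continuousOn)
        (fun y hy => ⟨hy, ⟨le_rfl, haL⟩⟩)
    exact (this.abs).rpow_const fun x _ => Or.inr hpo
  have hLint : IntegrableOn (fun y => |w y a| ^ p) R := hLc.integrableOn_compact hRc
  set G : (Fin k → ℝ) → ℝ := fun y => ∫ t in Ioc a (a + L), F (y, t) with hG
  have hGc : ContinuousOn G R := by
    apply continuousOn_of_dominated (bound := fun _ => M)
    · intro y hy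
      exact (hFc.comp ((continuous_const.prodMk continuous_id).continuousOn)
        (fun t ht => ⟨hy, Ioc_subset_Icc_self ht⟩)).aestronglyMeasurable measurableSet_Ioc
    · intro y hy
      exact (ae_restrict_iff' measurableSet_Ioc).2 (Filter.Eventually.of_forall fun t ht =>
        hM (y, t) ⟨hy, Ioc_subset_Icc_self ht⟩)
    · exact integrableOn_const measure_Ioc_lt_top.ne
    · exact (ae_restrict_iff' measurableSet_Ioc).2 (Filter.Eventually.of_forall fun t ht =>
        hFc.comp ((continuous_id.prodMk continuous_const).continuousOn)
          (fun y hy => ⟨hy, Ioc_subset_Icc_self ht⟩))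
  have hGint : IntegrableOn G R := hGc.integrableOn_compact hRc
  have hrw : ∀ y, (∫ t in a..(a + L), (|wt y t| ^ p + p * |w y t| ^ p)) = G y := fun y => by
    rw [hG, intervalIntegral.integral_of_le haL]
  calc (∫ y in R, |w y a| ^ p) ≤ ∫ y in R, G y :=
        setIntegral_mono_on hLint hGint hRm (fun y hy => (hrw y) ▸ (hpt y hy))
    _ = _ := by
        apply setIntegral_congr_fun hRm
        intro y _
        exact (hrw y).symm
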